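/- Let Λ : ℝ → ℝ satisfy Λ(0) = 0, let m̄ ∈ ℝ and ρ ∈ ℝ, and suppose υ* > 0 satisfies m̄ υ* − Λ(υ*) ≥ m̄ υ − Λ(υ) for all υ ∈ ℝ (i.e., υ* maximizes υ ↦ m̄υ − Λ(υ)). Define r* := (ρ − Λ(υ*)) / υ*. Then: (i) Λ(υ*) + r* υ* = ρ, so υ* is a solution υ₊ of the shifted equation Λ(υ) + r*υ = ρ; and (ii) for every r ∈ ℝ and every υ > 0 satisfying Λ(υ) + r υ = ρ, one has (m̄ + r) υ ≤ (m̄ + r*) υ*. Consequently, among all shifts r, the shift r* maximizes the product (m̄ + r) υ₊(r), where υ₊(r) is any positive solution of Λ(υ) + rυ = ρ. -/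

import Mathlib

/-- optimality of the shift `r* = (ρ − Λ(υ*))/υ*`: `υ*` solves the shifted
equation `Λ(υ) + r*υ = ρ`, and among all shifts `r` with positive solution `υ` of
`Λ(υ) + rυ = ρ`, the product `(m̄ + r)υ` is maximized at `(r*, υ*)`. -/
theorem stmt_15
    (Λ : ℝ → ℝ) (hΛ0 : Λ 0 = 0)
    (mbar ρ : ℝ)
    (υstar : ℝ) (hυ : 0 < υstar)
    (hmax : ∀ υ : ℝ, mbar * υ - Λ υ ≤ mbar * υstar - Λ υstar)
    (rstar : ℝ) (hrstar : rstar = (ρ - Λ υstar) / υstar) :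
    (Λ υstar + rstar * υstar = ρ) ∧
    (∀ r υ : ℝ, 0 < υ → Λ υ + r * υ = ρ →
      (mbar + r) * υ ≤ (mbar + rstar) * υstar) := by
  have h1 : Λ υstar + rstar * υstar = ρ := by
    rw [hrstar]; field_simp; ring
  refine ⟨h1, fun r υ hυ' heq => ?_⟩
  have h2 : r * υ = ρ - Λ υ := by linarith
  have h3 : rstar * υstar = ρ - Λ υstar := by linarith
  have := hmax υ
  nlinarith [hmax υ]
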